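/- Suppose β > h·(γ+δ) and K₀ + F > (γ+δ)/(β − h·(γ+δ)). Then the point (x*, y*) with x* = (γ+δ)/(β − h·(γ+δ)) and y* = β·r·(−γ−δ + (F+K₀)·(β − h·(γ+δ))) / (α·(F+K₀)·(β − h·(γ+δ))²) is an equilibrium of the crop–pest system, i.e., F₁(x*,y*) = 0 and F₂(x*,y*) = 0, and moreover x* > 0 and y* > 0. -/

import Mathlib

noncomputable def F1 (r K0 F α h x y : ℝ) : ℝ :=
  r * x * (1 - x / (K0 + F)) - α * x * y / (1 + h * x)

noncomputable def F2 (β δ γ h x y : ℝ) : ℝ :=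
  β * x * y / (1 + h * x) - (δ + γ) * y

theorem coexistence_equilibrium
    (r K0 F α β δ γ h : ℝ)
    (hr : 0 < r) (hK0 : 0 < K0) (hF : 0 < F) (hα : 0 < α)
    (hβ : 0 < β) (hδ : 0 < δ) (hγ : 0 < γ) (hh : 0 < h)
    (hcond : β > h * (γ + δ))
    (hcap : K0 + F > (γ + δ) / (β - h * (γ + δ))) :
    let xstar : ℝ := (γ + δ) / (β - h * (γ + δ))
    let ystar : ℝ := β * r * (-γ - δ + (F + K0) * (β - h * (γ + δ))) /
      (α * (F + K0) * (β - h * (γ + δ)) ^ 2)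
    F1 r K0 F α h xstar ystar = 0 ∧ F2 β δ γ h xstar ystar = 0 ∧
      0 < xstar ∧ 0 < ystar := by
  intro xstar ystar
  have hD : 0 < β - h * (γ + δ) := sub_pos.mpr hcond
  have hgd : 0 < γ + δ := by linarith
  have hx : 0 < xstar := div_pos hgd hD
  have hKF : 0 < K0 + F := by linarith
  have hFK : 0 < F + K0 := by linarith
  have hnum : 0 < -γ - δ + (F + K0) * (β - h * (γ + δ)) := by
    have : (γ + δ) / (β - h * (γ + δ)) * (β - h * (γ + δ)) <
        (K0 + F) * (β - h * (γ + δ)) := by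
      exact mul_lt_mul_of_pos_right hcap hD
    rw [div_mul_cancel₀ _ (ne_of_gt hD)] at this
    nlinarith
  have hy : 0 < ystar := by
    apply div_pos
    · positivity
    · positivity
  have hone : 1 + h * xstar = β / (β - h * (γ + δ)) := by
    show 1 + h * ((γ + δ) / (β - h * (γ + δ))) = _
    field_simp
    ring
  have honepos : (0:ℝ) < 1 + h * xstar := by
    rw [hone]; positivity
  refine ⟨?_, ?_, hx, hy⟩
  · show r * xstar * (1 - xstar / (K0 + F)) - α * xstar * ystar / (1 + h * xstar) = 0
    rw [hone]
    show r * ((γ + δ) / (β - h * (γ + δ))) * (1 - (γ + δ) / (β - h * (γ + δ)) / (K0 + F)) -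
      α * ((γ + δ) / (β - h * (γ + δ))) *
        (β * r * (-γ - δ + (F + K0) * (β - h * (γ + δ))) /
          (α * (F + K0) * (β - h * (γ + δ)) ^ 2)) / (β / (β - h * (γ + δ))) = 0
    field_simp [show β - (γ + δ) * h ≠ 0 by rw [mul_comm]; exact hD.ne']
    ring
  · show β * xstar * ystar / (1 + h * xstar) - (δ + γ) * ystar = 0
    rw [hone]
    show β * ((γ + δ) / (β - h * (γ + δ))) * ystar / (β / (β - h * (γ + δ))) -
      (δ + γ) * ystar = 0
    field_simp [show β - (γ + δ) * h ≠ 0 by rw [mul_comm]; exact hD.ne']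
    ring
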